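/- Let R be a commutative ring with 1/2 ∈ R that is weakly 4-fold stable, and let r₁, …, r_N ∈ R^* (N ≥ 2) be units with r₁ + … + r_N = 0. Then in K^M_2(R[ε]) one has {1 + r₁·ε, r₁} + … + {1 + r_N·ε, r_N} = 0. -/

import Mathlib

open TrivSqZeroExt

/-- The relations defining the Milnor K-group of a commutative ring `S`:
multilinearity relations and Steinberg relations (a generator `r₁ ⊗ … ⊗ r_n` with some
pair of consecutive entries summing to `1`). -/
def milnorRelSet (S : Type*) [CommRing S] (n : ℕ) : Set (FreeAbelianGroup (Fin n → Sˣ)) :=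
  {x | ∃ (f : Fin n → Sˣ) (i : Fin n) (u v : Sˣ),
      x = FreeAbelianGroup.of (Function.update f i (u * v))
        - FreeAbelianGroup.of (Function.update f i u)
        - FreeAbelianGroup.of (Function.update f i v)} ∪
  {x | ∃ (f : Fin n → Sˣ) (i j : Fin n), (i : ℕ) + 1 = (j : ℕ) ∧
      ((f i : S) + (f j : S) = 1) ∧ x = FreeAbelianGroup.of f}

/-- The `n`-th Milnor K-group of a commutative ring `S`: the quotient of `(Sˣ)^{⊗ n}`
(presented as the free abelian group on `n`-tuples of units, modulo multilinearity)
by the Steinberg relations. -/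
def MilnorK (S : Type*) [CommRing S] (n : ℕ) : Type _ :=
  FreeAbelianGroup (Fin n → Sˣ) ⧸ AddSubgroup.closure (milnorRelSet S n)

instance (S : Type*) [CommRing S] (n : ℕ) : AddCommGroup (MilnorK S n) :=
  QuotientAddGroup.Quotient.addCommGroup _

/-- The Milnor symbol `{r₁, …, r_n}`. -/
def milnorSymbol {S : Type*} [CommRing S] {n : ℕ} (f : Fin n → Sˣ) : MilnorK S n :=
  QuotientAddGroup.mk (FreeAbelianGroup.of f)

/-- Functoriality of Milnor K-groups in ring homomorphisms. -/
def MilnorK.map {S T : Type*} [CommRing S] [CommRing T] (φ : S →+* T) (n : ℕ) :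
    MilnorK S n →+ MilnorK T n := by
  refine QuotientAddGroup.lift _
    ((QuotientAddGroup.mk' (AddSubgroup.closure (milnorRelSet T n))).comp
      (FreeAbelianGroup.map (fun f => (Units.map (φ : S →* T)) ∘ f))) ?_
  intro x hx
  revert x hx
  rw [← SetLike.le_def, AddSubgroup.closure_le]
  rintro x (⟨f, i, u, v, rfl⟩ | ⟨f, i, j, hij, hsum, rfl⟩) <;>
    simp only [SetLike.mem_coe, AddMonoidHom.mem_ker, map_sub]
  · show milnorSymbol (Units.map (φ : S →* T) ∘ Function.update f i (u * v))
      - milnorSymbol (Units.map (φ : S →* T) ∘ Function.update f i u)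
      - milnorSymbol (Units.map (φ : S →* T) ∘ Function.update f i v) = (0 : MilnorK T n)
    unfold milnorSymbol
    change (_ : FreeAbelianGroup (Fin n → Tˣ) ⧸ AddSubgroup.closure (milnorRelSet T n)) - _ - _ = 0
    rw [← QuotientAddGroup.mk_sub, ← QuotientAddGroup.mk_sub, QuotientAddGroup.eq_zero_iff]
    refine AddSubgroup.subset_closure (Or.inl ⟨Units.map (φ : S →* T) ∘ f, i,
      Units.map (φ : S →* T) u, Units.map (φ : S →* T) v, ?_⟩)
    simp [Function.comp_update]
  · show milnorSymbol (Units.map (φ : S →* T) ∘ f) = (0 : MilnorK T n)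
    unfold milnorSymbol
    change (_ : FreeAbelianGroup (Fin n → Tˣ) ⧸ AddSubgroup.closure (milnorRelSet T n)) = 0
    rw [QuotientAddGroup.eq_zero_iff]
    refine AddSubgroup.subset_closure (Or.inr ⟨Units.map (φ : S →* T) ∘ f, i, j, hij, ?_, rfl⟩)
    simp only [Function.comp_apply, Units.coe_map, MonoidHom.coe_coe]
    rw [← map_add, hsum, map_one]

/-- The unit `1 + r·ε` of the dual numbers, with inverse `1 - r·ε`. -/
def oneAddEps (R : Type*) [CommRing R] (r : R) : (DualNumber R)ˣ where
  val := 1 + inr r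
  inv := 1 - inr r
  val_inv := by
    have h : (inr r : DualNumber R) * inr r = 0 := inr_mul_inr R r r
    ring_nf
    simp [pow_two, h]
  inv_val := by
    have h : (inr r : DualNumber R) * inr r = 0 := inr_mul_inr R r r
    ring_nf
    simp [pow_two, h]

/-- The `R`-algebra endomorphism `σ_a` of the dual numbers sending `ε` to `a·ε`. -/
def epsScale (R : Type*) [CommRing R] (a : R) : DualNumber R →+* DualNumber R where
  toFun x := inl x.fst + inr (a * x.snd)
  map_one' := by simp
  map_mul' x y := by
    ext
    · simp
    · simp [snd_mul, smul_eq_mul, mul_comm, mul_add]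
      ring
  map_zero' := by simp
  map_add' x y := by ext <;> simp [mul_add]

/-- A commutative ring `R` is weakly `k`-fold stable if for any `k - 1` elements
there is a unit `r` such that adding `r` to each of them yields a unit. -/
def WeaklyStable (R : Type*) [CommRing R] (k : ℕ) : Prop :=
  ∀ r : Fin (k - 1) → R, ∃ u : Rˣ, ∀ i, IsUnit (r i + (u : R))

section Generic
variable {S : Type*} [CommRing S]

lemma upd0 {α : Type*} (a b y : α) : Function.update ![a, b] 0 y = ![y, b] := by
  funext i; fin_cases i <;> simp [Function.update]

lemma upd1 {α : Type*} (a b y : α) : Function.update ![a, b] 1 y = ![a, y] := by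
  funext i; fin_cases i <;> simp [Function.update]

lemma mS_rel {x : FreeAbelianGroup (Fin 2 → Sˣ)} (hx : x ∈ milnorRelSet S 2) :
    (QuotientAddGroup.mk x : MilnorK S 2) = 0 := by
  rw [QuotientAddGroup.eq_zero_iff]
  exact AddSubgroup.subset_closure hx

lemma mS_mul_left (u v w : Sˣ) :
    milnorSymbol ![u * v, w] = milnorSymbol ![u, w] + milnorSymbol ![v, w] := by
  have h : milnorSymbol ![u * v, w] - milnorSymbol ![u, w] - milnorSymbol ![v, w]
      = (0 : MilnorK S 2) := by
    unfold milnorSymbol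
    change (_ : FreeAbelianGroup (Fin 2 → Sˣ) ⧸ AddSubgroup.closure (milnorRelSet S 2)) - _ - _ = 0
    rw [← QuotientAddGroup.mk_sub, ← QuotientAddGroup.mk_sub]
    exact mS_rel (Or.inl ⟨![1, w], 0, u, v, by rw [upd0, upd0, upd0]⟩)
  rw [sub_sub, sub_eq_zero] at h
  exact h

lemma mS_mul_right (u v w : Sˣ) :
    milnorSymbol ![u, v * w] = milnorSymbol ![u, v] + milnorSymbol ![u, w] := by
  have h : milnorSymbol ![u, v * w] - milnorSymbol ![u, v] - milnorSymbol ![u, w]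
      = (0 : MilnorK S 2) := by
    unfold milnorSymbol
    change (_ : FreeAbelianGroup (Fin 2 → Sˣ) ⧸ AddSubgroup.closure (milnorRelSet S 2)) - _ - _ = 0
    rw [← QuotientAddGroup.mk_sub, ← QuotientAddGroup.mk_sub]
    exact mS_rel (Or.inl ⟨![u, 1], 1, v, w, by rw [upd1, upd1, upd1]⟩)
  rw [sub_sub, sub_eq_zero] at h
  exact h

lemma mS_steinberg (u v : Sˣ) (h : (u : S) + (v : S) = 1) :
    milnorSymbol ![u, v] = 0 := by
  unfold milnorSymbol
  exact mS_rel (Or.inr ⟨![u, v], 0, 1, rfl, by simpa using h, rfl⟩)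

lemma mS_one_left (w : Sˣ) : milnorSymbol ![(1 : Sˣ), w] = 0 := by
  have := mS_mul_left (1 : Sˣ) 1 w
  rw [mul_one] at this
  exact left_eq_add.mp this

lemma mS_one_right (u : Sˣ) : milnorSymbol ![u, (1 : Sˣ)] = 0 := by
  have := mS_mul_right u (1 : Sˣ) 1
  rw [mul_one] at this
  exact left_eq_add.mp this

lemma mS_inv_left (u w : Sˣ) : milnorSymbol ![u⁻¹, w] = -milnorSymbol ![u, w] := by
  have := mS_mul_left u u⁻¹ w
  rw [mul_inv_cancel, mS_one_left] at this
  rw [add_comm] at this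
  exact eq_neg_of_add_eq_zero_left this.symm

lemma mS_inv_right (u w : Sˣ) : milnorSymbol ![u, w⁻¹] = -milnorSymbol ![u, w] := by
  have := mS_mul_right u w w⁻¹
  rw [mul_inv_cancel, mS_one_right] at this
  rw [add_comm] at this
  exact eq_neg_of_add_eq_zero_left this.symm

/-- `{u, -u} = 0` when `1 - u` is a unit. -/
lemma mS_neg_self (u : Sˣ) (h : IsUnit ((1 : S) - u)) :
    milnorSymbol ![u, -u] = 0 := by
  set m : Sˣ := h.unit with hm
  have hmv : (m : S) = 1 - u := h.unit_spec
  set m' : Sˣ := -m * u⁻¹ with hm'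
  have hm'v : (m' : S) = 1 - (u⁻¹ : Sˣ) := by
    push_cast [hm', hmv]
    linear_combination u.mul_inv
  have h1 : milnorSymbol ![u, m] = 0 := mS_steinberg u m (by rw [hmv]; ring)
  have h2 : milnorSymbol ![u⁻¹, m'] = 0 := mS_steinberg u⁻¹ m' (by rw [hm'v]; ring)
  have h3 : milnorSymbol ![u, m'] = 0 := by
    have := mS_inv_left u m'
    rw [h2] at this
    rw [← neg_eq_zero, ← this]
  have key : (-u) * m' = m := by
    ext
    push_cast [hm'v, hmv]
    linear_combination u.mul_inv
  have hneg : -u = m * m'⁻¹ := by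
    rw [← key, mul_assoc, mul_inv_cancel, mul_one]
  rw [hneg, mS_mul_right, h1, mS_inv_right, h3]
  simp

/-- `{u,v} + {v,u} = {uv, -uv} - {u,-u} - {v,-v}` (pure multilinearity). -/
lemma mS_anticomm_aux (u v : Sˣ) :
    milnorSymbol ![u, v] + milnorSymbol ![v, u]
      = milnorSymbol ![u * v, -(u * v)] - milnorSymbol ![u, -u]
        - milnorSymbol ![v, -v] := by
  have e1 : -(u * v) = (-u) * v := by ext; push_cast; ring
  have e2 : -(u * v) = u * (-v) := by ext; push_cast; ring
  have h1 : milnorSymbol ![u * v, -(u*v)]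
      = milnorSymbol ![u, -(u*v)] + milnorSymbol ![v, -(u*v)] := mS_mul_left u v _
  have h2 : milnorSymbol ![u, -(u*v)]
      = milnorSymbol ![u, -u] + milnorSymbol ![u, v] := by
    rw [show -(u*v) = (-u) * v from e1, mS_mul_right]
  have h3 : milnorSymbol ![v, -(u*v)]
      = milnorSymbol ![v, u] + milnorSymbol ![v, -v] := by
    rw [show -(u*v) = u * (-v) from e2, mS_mul_right]
  rw [h1, h2, h3]
  abel

end Generic

section Dual
variable (R : Type*) [CommRing R]

/-- The constant unit `inl u` of the dual numbers. -/
def CU (u : Rˣ) : (DualNumber R)ˣ :=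
  Units.map (algebraMap R (DualNumber R)).toMonoidHom u

variable {R}

lemma CU_val (u : Rˣ) : ((CU R u : (DualNumber R)ˣ) : DualNumber R) = inl (u : R) := by
  simp [CU, algebraMap_eq_inl]

lemma CU_mul (u v : Rˣ) : CU R (u * v) = CU R u * CU R v := map_mul _ u v

lemma CU_one : CU R 1 = 1 := map_one _

lemma CU_neg_one : CU R (-1) = -1 := by
  apply Units.ext
  rw [CU_val, Units.val_neg, Units.val_one]
  push_cast
  simp

lemma E_val (x : R) : ((oneAddEps R x : (DualNumber R)ˣ) : DualNumber R) = 1 + inr x := rfl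

lemma E_mul (x y : R) : oneAddEps R x * oneAddEps R y = oneAddEps R (x + y) := by
  apply Units.ext
  rw [Units.val_mul, E_val, E_val, E_val]
  rw [mul_add, mul_one, add_mul, one_mul, inr_mul_inr, inr_add]
  abel

lemma E_zero : oneAddEps R 0 = 1 := by
  apply Units.ext
  rw [E_val, Units.val_one, inr_zero, add_zero]

lemma E_neg (x : R) : oneAddEps R (-x) = (oneAddEps R x)⁻¹ := by
  refine eq_inv_of_mul_eq_one_right ?_
  rw [E_mul, add_neg_cancel, E_zero]

variable (R)

/-- `⟨x | v⟩ = {1 + xε, v}`. -/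
def Asym (x : R) (v : Rˣ) : MilnorK (DualNumber R) 2 :=
  milnorSymbol ![oneAddEps R x, CU R v]

/-- `{v, 1 + xε}`. -/
def Fsym (x : R) (v : Rˣ) : MilnorK (DualNumber R) 2 :=
  milnorSymbol ![CU R v, oneAddEps R x]

/-- `{1 + xε, 1 + yε}`. -/
def fsym (x y : R) : MilnorK (DualNumber R) 2 :=
  milnorSymbol ![oneAddEps R x, oneAddEps R y]

/-- `{1 + vε, v}`. -/
def Dsym (v : Rˣ) : MilnorK (DualNumber R) 2 := Asym R (v : R) v

variable {R}

lemma Asym_add_left (x y : R) (v : Rˣ) :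
    Asym R (x + y) v = Asym R x v + Asym R y v := by
  rw [Asym, ← E_mul, mS_mul_left]; rfl

lemma Asym_zero_left (v : Rˣ) : Asym R 0 v = 0 := by
  rw [Asym, E_zero, mS_one_left]

lemma Asym_neg_left (x : R) (v : Rˣ) : Asym R (-x) v = -Asym R x v := by
  have := Asym_add_left x (-x) v
  rw [add_neg_cancel, Asym_zero_left] at this
  rw [add_comm] at this
  exact eq_neg_of_add_eq_zero_left this.symm

lemma Asym_mul_right (x : R) (v w : Rˣ) :
    Asym R x (v * w) = Asym R x v + Asym R x w := by
  rw [Asym, CU_mul, mS_mul_right]; rfl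

lemma Asym_one_right (x : R) : Asym R x 1 = 0 := by
  rw [Asym, CU_one, mS_one_right]

lemma Asym_inv_right (x : R) (v : Rˣ) : Asym R x v⁻¹ = -Asym R x v := by
  have := Asym_mul_right x v v⁻¹
  rw [mul_inv_cancel, Asym_one_right, add_comm] at this
  exact eq_neg_of_add_eq_zero_left this.symm

lemma Fsym_add_left (x y : R) (v : Rˣ) :
    Fsym R (x + y) v = Fsym R x v + Fsym R y v := by
  rw [Fsym, ← E_mul, mS_mul_right]; rfl

lemma Fsym_zero_left (v : Rˣ) : Fsym R 0 v = 0 := by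
  rw [Fsym, E_zero, mS_one_right]

lemma Fsym_neg_left (x : R) (v : Rˣ) : Fsym R (-x) v = -Fsym R x v := by
  have := Fsym_add_left x (-x) v
  rw [add_neg_cancel, Fsym_zero_left, add_comm] at this
  exact eq_neg_of_add_eq_zero_left this.symm

lemma Fsym_mul_right (x : R) (v w : Rˣ) :
    Fsym R x (v * w) = Fsym R x v + Fsym R x w := by
  rw [Fsym, CU_mul, mS_mul_left]; rfl

lemma fsym_add_left (x y z : R) : fsym R (x + y) z = fsym R x z + fsym R y z := by
  rw [fsym, ← E_mul, mS_mul_left]; rfl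

lemma fsym_add_right (x y z : R) : fsym R x (y + z) = fsym R x y + fsym R x z := by
  rw [fsym, ← E_mul, mS_mul_right]; rfl

lemma fsym_zero_left (z : R) : fsym R 0 z = 0 := by
  rw [fsym, E_zero, mS_one_left]

lemma fsym_neg_right (x y : R) : fsym R x (-y) = -fsym R x y := by
  have := fsym_add_right x y (-y)
  rw [add_neg_cancel] at this
  have h0 : fsym R x 0 = 0 := by rw [fsym, E_zero, mS_one_right]
  rw [h0, add_comm] at this
  exact eq_neg_of_add_eq_zero_left this.symm

end Dual

section Dual2
variable {R : Type*} [CommRing R]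

/-- `{1 + xε, -1} = 0` when `2` is invertible. -/
lemma Asym_neg_one [Invertible (2 : R)] (x : R) : Asym R x (-1) = 0 := by
  set h : R := ⅟2 * x with hh
  have hx : h + h = x := by
    rw [hh, ← add_mul, invOf_two_add_invOf_two, one_mul]
  have e1 : Asym R x (-1) = Asym R h (-1) + Asym R h (-1) := by
    rw [← hx, Asym_add_left]
  have e2 : Asym R h (-1) + Asym R h (-1) = 0 := by
    have := Asym_mul_right h (-1 : Rˣ) (-1)
    rw [neg_mul_neg, one_mul, Asym_one_right] at this
    exact this.symm
  rw [e1, e2]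

/-- The Steinberg relation `{u(1+aε), w(1+bε)} = 0` expanded. -/
lemma star_rel (u w : Rˣ) (h1 : (u : R) + w = 1) (a b : R)
    (h2 : (u : R) * a + w * b = 0) :
    Fsym R b u + Asym R a w + fsym R a b = 0 := by
  have hval : ((CU R u * oneAddEps R a : (DualNumber R)ˣ) : DualNumber R)
      + ((CU R w * oneAddEps R b : (DualNumber R)ˣ) : DualNumber R) = 1 := by
    rw [Units.val_mul, Units.val_mul, CU_val, CU_val, E_val, E_val]
    rw [mul_add, mul_one, inl_mul_inr, mul_add, mul_one, inl_mul_inr]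
    have : (inl (u:R) + inl (w:R) : DualNumber R) + (inr ((u:R)*a) + inr ((w:R)*b)) = 1 := by
      rw [← inl_add, ← inr_add, h1, h2, inr_zero, inl_one, add_zero]
    rw [← this]; simp only [smul_eq_mul]; abel
  have h0 := mS_steinberg _ _ hval
  rw [mS_mul_left, mS_mul_right, mS_mul_right] at h0
  have hcc : milnorSymbol ![CU R u, CU R w] = 0 := by
    apply mS_steinberg
    rw [CU_val, CU_val, ← inl_add, h1, inl_one]
  rw [hcc, zero_add] at h0
  show Fsym R b u + (Asym R a w + fsym R a b) = 0
  rw [← add_assoc]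
  rw [← h0]; abel

lemma star_rel' (u w : Rˣ) (h1 : (u : R) + w = 1) (a b : R)
    (h2 : (u : R) * a + w * b = 0) :
    Fsym R a w + Asym R b u + fsym R b a = 0 := by
  have h1' : (w : R) + u = 1 := by rw [add_comm]; exact h1
  have h2' : (w : R) * b + u * a = 0 := by rw [add_comm]; exact h2
  exact star_rel w u h1' b a h2'

/-- `-E x = C(-1) * E x` as units. -/
lemma neg_E (x : R) : -(oneAddEps R x) = CU R (-1) * oneAddEps R x := by
  rw [CU_neg_one, neg_one_mul]

/-- `⟨x|v⟩ + {v, 1+xε} = -{1+xε,1+xε}` whenever `1 - v` is a unit (witnessed by `w`). -/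
lemma g_eq [Invertible (2 : R)] (x : R) (v w : Rˣ) (hvw : (v : R) + w = 1) :
    Asym R x v + Fsym R x v = -(fsym R x x) := by
  have hU : milnorSymbol ![CU R v * oneAddEps R x, -(CU R v * oneAddEps R x)]
      = (0 : MilnorK (DualNumber R) 2) := by
    apply mS_neg_self
    rw [isUnit_iff_isUnit_fst]
    have : (1 - ((CU R v * oneAddEps R x : (DualNumber R)ˣ) : DualNumber R)).fst
        = (w : R) := by
      rw [Units.val_mul, CU_val, E_val]
      simp only [fst_sub, fst_one, fst_mul, fst_inl, fst_add, fst_inr]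
      linear_combination -hvw
    rw [this]
    exact w.isUnit
  have hV : milnorSymbol ![CU R v, -(CU R v)] = (0 : MilnorK (DualNumber R) 2) := by
    apply mS_neg_self
    rw [isUnit_iff_isUnit_fst]
    have : ((1 : DualNumber R) - CU R v).fst = (w : R) := by
      rw [CU_val]
      simp only [fst_sub, fst_one, fst_inl]
      linear_combination -hvw
    rw [this]
    exact w.isUnit
  have hE : milnorSymbol ![oneAddEps R x, -(oneAddEps R x)] = fsym R x x := by
    rw [neg_E, mS_mul_right]
    have : milnorSymbol ![oneAddEps R x, CU R (-1)] = 0 := Asym_neg_one x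
    rw [this, zero_add]; rfl
  have key := mS_anticomm_aux (CU R v) (oneAddEps R x)
  rw [hU, hV, hE] at key
  have key' : Fsym R x v + Asym R x v = -(fsym R x x) := key.trans (by abel)
  rw [add_comm] at key'
  exact key'

end Dual2

section Dual3
variable {R : Type*} [CommRing R] [Invertible (2 : R)]

lemma fsym_diag (c : R) : fsym R c c = 0 := by
  set u : Rˣ := -1 with hu
  set w : Rˣ := (isUnit_of_invertible (2 : R)).unit with hw
  have hwv : (w : R) = 2 := (isUnit_of_invertible (2 : R)).unit_spec
  have h1 : (u : R) + w = 1 := by rw [hwv]; push_cast [hu]; ring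
  have h2 : (u : R) * (2 * c) + (w : R) * c = 0 := by rw [hwv]; push_cast [hu]; ring
  have eq1 := star_rel u w h1 (2 * c) c h2
  have eq2 := star_rel' u w h1 (2 * c) c h2
  have eq3 : Asym R c u + Fsym R c u = -(fsym R c c) := g_eq c u w (by rw [hwv]; push_cast [hu]; ring)
  have eq4 : Asym R (2 * c) w + Fsym R (2 * c) w
      = -(fsym R c c + fsym R c c + fsym R c c + fsym R c c) := by
    have := g_eq (2 * c) w u (by rw [hwv]; push_cast [hu]; ring)
    rw [this]
    have h2c : (2 : R) * c = c + c := two_mul c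
    rw [h2c, fsym_add_left, fsym_add_right]
    abel
  -- expand the fsym's in eq1, eq2
  have h2c : (2 : R) * c = c + c := two_mul c
  have e1 : fsym R (2 * c) c = fsym R c c + fsym R c c := by
    rw [h2c, fsym_add_left]
  have e2 : fsym R c (2 * c) = fsym R c c + fsym R c c := by
    rw [h2c, fsym_add_right]
  rw [e1] at eq1
  rw [e2] at eq2
  -- eq1 : F(c,u) + A(2c,w) + (p + p) = 0
  -- eq2 : F(2c,w) + A(c,u) + (p + p) = 0
  have key : -(fsym R c c) = 0 := by
    calc -(fsym R c c)
        = (Asym R c u + Fsym R c u) + (Asym R (2*c) w + Fsym R (2*c) w)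
          + (fsym R c c + fsym R c c + fsym R c c + fsym R c c) := by
          rw [eq3, eq4]; abel
      _ = (Fsym R c u + Asym R (2*c) w + (fsym R c c + fsym R c c))
          + (Fsym R (2*c) w + Asym R c u + (fsym R c c + fsym R c c)) := by abel
      _ = 0 := by rw [eq1, eq2, add_zero]
  rw [← neg_neg (fsym R c c), key, neg_zero]

lemma fsym_antisym (x y : R) : fsym R x y + fsym R y x = 0 := by
  have h : fsym R (x + y) (x + y)
      = fsym R x x + fsym R x y + fsym R y x + fsym R y y := by
    rw [fsym_add_left, fsym_add_right, fsym_add_right]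
    abel
  rw [fsym_diag, fsym_diag, fsym_diag, zero_add, add_zero] at h
  exact h.symm

/-- Anticommutativity of mixed symbols: `{1+xε, v} = -{v, 1+xε}` for all `v`. -/
lemma g_zero (hst : WeaklyStable R 4) (x : R) (v : Rˣ) :
    Asym R x v + Fsym R x v = 0 := by
  obtain ⟨t, ht⟩ := hst ![-1, -(v : R), 0]
  have ht0 : IsUnit ((-1 : R) + t) := by simpa using ht 0
  have ht1 : IsUnit (-(v : R) + t) := by simpa using ht 1
  have hw1 : IsUnit (1 - (t : R)) := by
    have := ht0.neg
    rw [neg_add, neg_neg, ← sub_eq_add_neg] at this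
    exact this
  -- g x t = 0
  have g1 : Asym R x t + Fsym R x t = 0 := by
    have := g_eq x t hw1.unit (by rw [hw1.unit_spec]; ring)
    rw [fsym_diag, neg_zero] at this
    exact this
  -- g x (t⁻¹ * v) = 0
  have hvt : IsUnit ((v : R) - t) := by
    have := ht1.neg
    rw [neg_add, neg_neg, ← sub_eq_add_neg] at this
    exact this
  have hw2 : IsUnit (1 - ((t⁻¹ * v : Rˣ) : R)) := by
    have heq : (1 : R) - ((t⁻¹ * v : Rˣ) : R)
        = -(((t⁻¹ : Rˣ) : R) * ((v : R) - t)) := by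
      push_cast
      linear_combination -t.inv_mul
    rw [heq]
    exact ((t⁻¹).isUnit.mul hvt).neg
  have g2 : Asym R x (t⁻¹ * v) + Fsym R x (t⁻¹ * v) = 0 := by
    have := g_eq x (t⁻¹ * v) hw2.unit (by rw [hw2.unit_spec]; ring)
    rw [fsym_diag, neg_zero] at this
    exact this
  have hv : v = t * (t⁻¹ * v) := by rw [← mul_assoc, mul_inv_cancel, one_mul]
  rw [hv, Asym_mul_right, Fsym_mul_right]
  calc Asym R x t + Asym R x (t⁻¹ * v) + (Fsym R x t + Fsym R x (t⁻¹ * v))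
      = (Asym R x t + Fsym R x t) + (Asym R x (t⁻¹ * v) + Fsym R x (t⁻¹ * v)) := by abel
    _ = 0 := by rw [g1, g2, add_zero]

/-- `{1+xε,1+yε} = Dx + Dy - D(x+y)` for units `x, y, x+y = z`. -/
lemma fsym_units (hst : WeaklyStable R 4) (x y z : Rˣ) (h : (x : R) + y = z) :
    fsym R (x : R) (y : R) = Dsym R x + Dsym R y - Dsym R z := by
  set u : Rˣ := y * z⁻¹ with hu
  set w : Rˣ := x * z⁻¹ with hw
  have hz : (z : R) * ((z⁻¹ : Rˣ) : R) = 1 := z.mul_inv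
  have h1 : (u : R) + w = 1 := by
    push_cast [hu, hw]
    linear_combination ((z⁻¹:Rˣ):R) * h + hz
  have h2 : (u : R) * (x : R) + (w : R) * (-(y : R)) = 0 := by
    push_cast [hu, hw]; ring
  have hs := star_rel u w h1 (x : R) (-(y : R)) h2
  rw [Fsym_neg_left, fsym_neg_right] at hs
  -- hs : -F(x? ) careful: star gives Fsym b u + Asym a w + fsym a b with a = x, b = -y
  -- hs : -Fsym y u + Asym x w + -(fsym x y) = 0
  have hF : Fsym R (y : R) u = -Asym R (y : R) u := by
    have := g_zero hst (y : R) u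
    rw [add_comm] at this
    exact eq_neg_of_add_eq_zero_left this
  rw [hF, neg_neg] at hs
  -- hs : A y u + A x w + -f x y = 0  ⇒ f x y = A x w + A y u
  have hf : fsym R (x : R) (y : R) = Asym R (x : R) w + Asym R (y : R) u := by
    have hd : fsym R (x : R) (y : R) - (Asym R (x : R) w + Asym R (y : R) u)
        = -(Asym R (y : R) u + Asym R (x : R) w + -fsym R (x : R) (y : R)) := by abel
    rw [hs, neg_zero] at hd
    exact sub_eq_zero.mp hd
  have hAx : Asym R (x : R) w = Dsym R x - Asym R (x : R) z := by
    rw [hw, Asym_mul_right, Asym_inv_right, Dsym]; abel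
  have hAy : Asym R (y : R) u = Dsym R y - Asym R (y : R) z := by
    rw [hu, Asym_mul_right, Asym_inv_right, Dsym]; abel
  have hAz : Asym R (x : R) z + Asym R (y : R) z = Dsym R z := by
    rw [← Asym_add_left, h, Dsym]
  rw [hf, hAx, hAy, ← hAz]; abel

end Dual3

section Dual4
variable {R : Type*} [CommRing R] [Invertible (2 : R)]

lemma two_fsym_units (hst : WeaklyStable R 4) (x y z : Rˣ) (h : (x : R) + y = z) :
    fsym R (x : R) (y : R) + fsym R (x : R) (y : R) = 0 := by
  have h' : (y : R) + x = z := by rw [add_comm]; exact h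
  have e1 := fsym_units hst x y z h
  have e2 := fsym_units hst y x z h'
  have hsym : fsym R (x : R) (y : R) = fsym R (y : R) (x : R) := by
    rw [e1, e2]; abel
  have := fsym_antisym (x : R) (y : R)
  rw [← hsym] at this
  exact this

lemma two_fsym_unit_left (hst : WeaklyStable R 4) (x : Rˣ) (y : R) :
    fsym R (x : R) y + fsym R (x : R) y = 0 := by
  obtain ⟨t, ht⟩ := hst ![(x : R), -y, -((x : R) + y)]
  have ht0 : IsUnit ((x : R) + t) := by simpa using ht 0
  have ht1 : IsUnit (y - (t : R)) := by
    have := (ht 1).neg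
    rw [show (![(x : R), -y, -((x : R) + y)] 1 : R) = -y by simp] at this
    rw [neg_add, neg_neg, ← sub_eq_add_neg] at this
    exact this
  have ht2 : IsUnit ((x : R) + (y - t)) := by
    have := (ht 2).neg
    rw [show (![(x : R), -y, -((x : R) + y)] 2 : R) = -((x : R) + y) by simp] at this
    rw [neg_add, neg_neg, ← sub_eq_add_neg] at this
    rw [show (x : R) + (y - t) = (x : R) + y - t by ring]
    exact this
  have s1 : fsym R (x : R) (t : R) + fsym R (x : R) (t : R) = 0 :=
    two_fsym_units hst x t ht0.unit (by rw [ht0.unit_spec])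
  have s2 : fsym R (x : R) ((ht1.unit : Rˣ) : R) + fsym R (x : R) ((ht1.unit : Rˣ) : R)
      = 0 := two_fsym_units hst x ht1.unit ht2.unit
        (by rw [ht1.unit_spec, ht2.unit_spec])
  rw [ht1.unit_spec] at s2
  have hy : y = (t : R) + (y - t) := by ring
  rw [hy, fsym_add_right]
  calc fsym R (x:R) (t:R) + fsym R (x:R) (y - t) + (fsym R (x:R) (t:R) + fsym R (x:R) (y - t))
      = (fsym R (x:R) (t:R) + fsym R (x:R) (t:R)) + (fsym R (x:R) (y-t) + fsym R (x:R) (y-t)) := by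
        abel
    _ = 0 := by rw [s1, s2, add_zero]

lemma two_fsym (hst : WeaklyStable R 4) (x y : R) :
    fsym R x y + fsym R x y = 0 := by
  obtain ⟨t, ht⟩ := hst ![-x, 0, 0]
  have ht0 : IsUnit (x - (t : R)) := by
    have := (ht 0).neg
    rw [show (![-x, (0:R), 0] 0 : R) = -x by simp] at this
    rw [neg_add, neg_neg, ← sub_eq_add_neg] at this
    exact this
  have hx : x = (t : R) + (x - t) := by ring
  rw [hx, fsym_add_left]
  have s1 := two_fsym_unit_left hst t y
  have s2 := two_fsym_unit_left hst ht0.unit y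
  rw [ht0.unit_spec] at s2
  calc fsym R (t:R) y + fsym R (x - t) y + (fsym R (t:R) y + fsym R (x - t) y)
      = (fsym R (t:R) y + fsym R (t:R) y) + (fsym R (x-t) y + fsym R (x-t) y) := by abel
    _ = 0 := by rw [s1, s2, add_zero]

lemma fsym_zero (hst : WeaklyStable R 4) (x y : R) : fsym R x y = 0 := by
  have hx : x = ⅟2 * x + ⅟2 * x := by
    rw [← add_mul, invOf_two_add_invOf_two, one_mul]
  rw [hx, fsym_add_left]
  exact two_fsym hst (⅟2 * x) y

/-- Additivity: `D x + D y = D z` when `x + y = z` (all units). -/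
lemma Dsym_add (hst : WeaklyStable R 4) (x y z : Rˣ) (h : (x : R) + y = z) :
    Dsym R x + Dsym R y = Dsym R z := by
  have := fsym_units hst x y z h
  rw [fsym_zero hst] at this
  exact sub_eq_zero.mp this.symm

/-- `D (-x) = -D x`. -/
lemma Dsym_neg (x : Rˣ) : Dsym R (-x) = -Dsym R x := by
  have hval : ((-x : Rˣ) : R) = -(x : R) := Units.val_neg x
  have h1 : Dsym R (-x) = Asym R (-(x : R)) (-x) := by rw [Dsym, hval]
  rw [h1, show (-x : Rˣ) = -1 * x by rw [neg_one_mul], Asym_mul_right,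
    Asym_neg_left, Asym_neg_left, Asym_neg_one, Dsym]
  abel

end Dual4

section Final
variable {R : Type*} [CommRing R] [Invertible (2 : R)]

lemma list_Dsym (hst : WeaklyStable R 4) :
    ∀ (n : ℕ) (L : List Rˣ), L.length = n → 2 ≤ n →
      (L.map (fun u : Rˣ => (u : R))).sum = 0 → (L.map (Dsym R)).sum = 0 := by
  intro n
  induction n using Nat.strong_induction_on with
  | _ n ih =>
    intro L hlen h2 hsum
    match L with
    | [] => simp at hlen; omega
    | [a] => simp at hlen; omega
    | [a, b] =>
      simp only [List.map_cons, List.map_nil, List.sum_cons, List.sum_nil, add_zero] at hsum ⊢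
      have hb : b = -a := by
        apply Units.ext
        rw [Units.val_neg]
        linear_combination hsum
      rw [hb, Dsym_neg, add_neg_cancel]
    | a :: b :: c :: tl =>
      obtain ⟨t, ht⟩ := hst ![-(b : R), (a : R), -((b : R) + (c : R))]
      have ht0 : IsUnit ((b : R) - t) := by
        have := (ht 0).neg
        rw [show (![-(b : R), (a : R), -((b : R) + (c : R))] 0 : R) = -(b:R) by simp] at this
        rw [neg_add, neg_neg, ← sub_eq_add_neg] at this
        exact this
      have ht1 : IsUnit ((a : R) + t) := by
        have := ht 1
        rw [show (![-(b : R), (a : R), -((b : R) + (c : R))] 1 : R) = (a:R) by simp] at this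
        exact this
      have ht2 : IsUnit ((b : R) - t + c) := by
        have := (ht 2).neg
        rw [show (![-(b : R), (a : R), -((b : R) + (c : R))] 2 : R) = -((b:R)+(c:R)) by simp]
          at this
        rw [neg_add, neg_neg, ← sub_eq_add_neg] at this
        rw [show (b : R) - t + c = (b:R) + c - t by ring]
        exact this
      set L' : List Rˣ := ht1.unit :: ht2.unit :: tl with hL'
      have hlen' : L'.length = n - 1 := by
        simp only [hL', List.length_cons]
        simp only [List.length_cons] at hlen
        omega
      have h2' : 2 ≤ n - 1 := by
        simp only [List.length_cons] at hlen
        omega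
      have hsum' : (L'.map (fun u : Rˣ => (u : R))).sum = 0 := by
        simp only [hL', List.map_cons, List.sum_cons, ht1.unit_spec, ht2.unit_spec]
        simp only [List.map_cons, List.sum_cons] at hsum
        linear_combination hsum
      have hres := ih (n - 1) (by omega) L' hlen' h2' hsum'
      -- now relate the two D-sums
      have s1 : Dsym R t + Dsym R ht0.unit = Dsym R b :=
        Dsym_add hst t ht0.unit b (by rw [ht0.unit_spec]; ring)
      have s2 : Dsym R a + Dsym R t = Dsym R ht1.unit :=
        Dsym_add hst a t ht1.unit (by rw [ht1.unit_spec])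
      have s3 : Dsym R ht0.unit + Dsym R c = Dsym R ht2.unit :=
        Dsym_add hst ht0.unit c ht2.unit (by rw [ht0.unit_spec, ht2.unit_spec])
      simp only [hL', List.map_cons, List.sum_cons] at hres ⊢
      rw [← s2, ← s3] at hres
      rw [← s1, ← hres]
      abel

end Final
/-- if `1/2 ∈ R`, `R` is weakly 4-fold stable and `r₁, …, r_N` (`N ≥ 2`) are
units with `r₁ + … + r_N = 0`, then `{1 + r₁ε, r₁} + … + {1 + r_Nε, r_N} = 0` in
`K^M_2(R[ε])`. -/
theorem stmt_14 (R : Type*) [CommRing R] [Invertible (2 : R)]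
    (hst : WeaklyStable R 4) (N : ℕ) (hN : 2 ≤ N) (r : Fin N → Rˣ)
    (hsum : ∑ i, (r i : R) = 0) :
    ∑ i, milnorSymbol ![oneAddEps R (r i : R),
        Units.map (algebraMap R (DualNumber R)).toMonoidHom (r i)]
      = (0 : MilnorK (DualNumber R) 2) := by
  have key : (((List.ofFn r).map (Dsym R)).sum : MilnorK (DualNumber R) 2) = 0 := by
    apply list_Dsym hst N (List.ofFn r) (List.length_ofFn (f := r)) hN
    rw [List.map_ofFn, List.sum_ofFn]
    simpa using hsum
  rw [List.map_ofFn, List.sum_ofFn] at key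
  have : ∀ i, (Dsym R ∘ r) i
      = milnorSymbol ![oneAddEps R (r i : R),
          Units.map (algebraMap R (DualNumber R)).toMonoidHom (r i)] := fun i => rfl
  rw [← Finset.sum_congr rfl (fun i _ => this i)]
  exact key
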